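/- Let p > 3 be prime, r odd coprime to p, d = p^n+1, m | n with n/m odd, d' = p^m+1, e = d/d', and a = t^d in F_p(t). Then (x,y) = (t^e, t^{e(r+1)/2}(t^{re}+1)^{d'/2}) satisfies y^2 = x(x^r+1)(x^r+a^r) over F_p(t). -/

import Mathlib

/-- Let `p > 3` be prime, `r` odd coprime to `p`, `d = p^n + 1`, `m ∣ n` with
`n/m` odd, `d' = p^m + 1`, `e = d/d'`, and `a = t^d` in `F_p(t)`.  Then
`(x, y) = (t^e, t^(e(r+1)/2) * (t^(re) + 1)^(d'/2))` satisfies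
`y^2 = x * (x^r + 1) * (x^r + a^r)`. -/
theorem stmt2 (p : ℕ) [Fact p.Prime] (hp : 3 < p) (r : ℕ) (hr : Odd r)
    (hrp : Nat.Coprime r p) (m n : ℕ) (hm : 0 < m) (hmn : m ∣ n)
    (hodd : Odd (n / m)) :
    let K := RatFunc (ZMod p)
    let t : K := RatFunc.X
    let d := p ^ n + 1
    let d' := p ^ m + 1
    let e := d / d'
    let a : K := t ^ d
    let x : K := t ^ e
    let y : K := t ^ (e * (r + 1) / 2) * (t ^ (r * e) + 1) ^ (d' / 2)
    y ^ 2 = x * (x ^ r + 1) * (x ^ r + a ^ r) := by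
  intro K t d d' e a x y
  have hppos : 0 < p := by omega
  -- d' divides d
  have hkn : n = m * (n / m) := (Nat.mul_div_cancel' hmn).symm
  have hdvd : d' ∣ d := by
    have := hodd.nat_add_dvd_pow_add_pow (p ^ m) 1
    simpa [d, d', one_pow, ← pow_mul, ← hkn] using this
  have hed : e * d' = d := Nat.div_mul_cancel hdvd
  -- parities
  have hd'even : 2 ∣ d' := by
    have : Odd (p ^ m) := (Nat.Prime.odd_of_ne_two (Fact.out) (by omega)).pow
    obtain ⟨k, hk⟩ := this
    exact ⟨k + 1, by omega⟩
  have hr1 : 2 ∣ e * (r + 1) := by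
    obtain ⟨k, hk⟩ := hr
    exact ⟨e * (k + 1), by rw [hk]; ring⟩
  have h1 : e * (r + 1) / 2 * 2 = e * (r + 1) := Nat.div_mul_cancel hr1
  have h2 : d' / 2 * 2 = d' := Nat.div_mul_cancel hd'even
  -- frobenius in char p
  haveI : CharP K p := charP_of_injective_algebraMap' (A := RatFunc (ZMod p)) (ZMod p) p
  haveI : ExpChar K p := .prime Fact.out
  have hfrob : (t ^ (r * e) + 1) ^ p ^ m = t ^ (r * e * p ^ m) + 1 := by
    rw [add_pow_char_pow, one_pow, ← pow_mul]
  -- key exponent identity: d = e * p^m + e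
  have hde : d = e * p ^ m + e := by
    have : e * d' = e * p ^ m + e := by show e * (p ^ m + 1) = _; ring
    omega
  have hxa : x ^ r + a ^ r = t ^ (r * e) * (t ^ (r * e) + 1) ^ p ^ m := by
    rw [hfrob, mul_add, mul_one, ← pow_add]
    show (t ^ e) ^ r + (t ^ d) ^ r = t ^ (r * e + r * e * p ^ m) + t ^ (r * e)
    rw [← pow_mul, ← pow_mul, mul_comm e r,
      show d * r = r * e + r * e * p ^ m from by rw [hde]; ring, add_comm]
  calc y ^ 2 = t ^ (e * (r + 1) / 2 * 2) * (t ^ (r * e) + 1) ^ (d' / 2 * 2) := by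
        rw [mul_pow, ← pow_mul, ← pow_mul]
    _ = t ^ (e * (r + 1)) * (t ^ (r * e) + 1) ^ d' := by rw [h1, h2]
    _ = x * (x ^ r + 1) * (x ^ r + a ^ r) := by
        rw [hxa]
        have hd' : d' = p ^ m + 1 := rfl
        show t ^ (e * (r + 1)) * (t ^ (r * e) + 1) ^ d' =
          t ^ e * ((t ^ e) ^ r + 1) * (t ^ (r * e) * (t ^ (r * e) + 1) ^ p ^ m)
        rw [← pow_mul, hd', mul_comm e r]
        ring
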